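/- Let R be a local ring, x a non-zerodivisor in the maximal ideal, S = R/(x^n) with n > 1, R̄ = R/(x), and T an S-module of finite projective dimension over S. Then the submodule (0 :_T x) of elements of T annihilated by x is isomorphic to T/xT. -/

import Mathlib

open CategoryTheory

/-- `M` has projective dimension at most `n` over `R`, expressed by the standard
characterization: `Ext^{n+1}_R(M, N) = 0` for every `R`-module `N`. -/
def ProjDimLE (R : Type) [CommRing R] (M : Type) [AddCommGroup M] [Module R M] (n : ℕ) : Prop :=
  ∀ N : ModuleCat R,
    Subsingleton (((Ext R (ModuleCat R) (n + 1)).obj (Opposite.op (ModuleCat.of R M))).obj N)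

section Good

variable {S : Type} [CommRing S]

/-- Every element killed by `a` is a multiple of `b`. -/
def Good (a b : S) (M : Type) [AddCommGroup M] [Module S M] : Prop :=
  ∀ m : M, a • m = 0 → ∃ m', m = b • m'

lemma good_of_retract {a b : S} {M N : Type} [AddCommGroup M] [Module S M]
    [AddCommGroup N] [Module S N] (r : M →ₗ[S] N) (ι : N →ₗ[S] M)
    (hrι : ∀ x, r (ι x) = x) (hM : Good a b M) : Good a b N := by
  intro m hm
  obtain ⟨m', hm'⟩ := hM (ι m) (by rw [← map_smul, hm, map_zero])
  exact ⟨r m', by rw [← hrι m, hm', map_smul]⟩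

lemma good_finsupp {a b : S} (hS : Good a b S) (ι : Type) : Good a b (ι →₀ S) := by
  classical
  intro v hv
  set g : S → S := fun s => if s = 0 then 0 else if h : ∃ t, s = b * t then h.choose else 0
    with hg
  have hgspec : ∀ s : S, (∃ t, s = b * t) → s = b * g s := by
    intro s hs
    by_cases h0 : s = 0
    · simp [hg, h0]
    · simp only [hg, h0, if_false, dif_pos hs]
      exact hs.choose_spec
  refine ⟨v.mapRange g (by simp [hg]), ?_⟩
  ext i
  have hvi : a • v i = 0 := by
    have := DFunLike.congr_fun hv i
    simpa using this
  obtain ⟨t, ht⟩ := hS (v i) hvi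
  have : v i = b * g (v i) := hgspec _ ⟨t, by simpa [smul_eq_mul] using ht⟩
  simpa [Finsupp.mapRange_apply, smul_eq_mul] using this

lemma good_of_projective {a b : S} (hS : Good a b S) (M : Type) [AddCommGroup M]
    [Module S M] (hM : Module.Projective S M) : Good a b M := by
  obtain ⟨s, hs⟩ := Module.projective_def.mp hM
  exact good_of_retract (Finsupp.linearCombination S id) s hs (good_finsupp hS M)

lemma good_climb {a b : S} (hab : a * b = 0) {F M : Type} [AddCommGroup F] [Module S F]
    [AddCommGroup M] [Module S M] (f : F →ₗ[S] M) (hf : Function.Surjective f)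
    (hker : ∀ p, f p = 0 → b • p = 0 → ∃ q, f q = 0 ∧ p = a • q)
    (hF : Good a b F) : Good a b M := by
  intro m hm
  obtain ⟨p, rfl⟩ := hf m
  have h1 : f (a • p) = 0 := by rw [map_smul, hm]
  have h2 : b • a • p = (0 : F) := by
    rw [smul_smul, mul_comm, hab, zero_smul]
  obtain ⟨q, hq0, hq⟩ := hker (a • p) h1 h2
  have h3 : a • (p - q) = 0 := by rw [smul_sub, hq, sub_self]
  obtain ⟨r, hr⟩ := hF (p - q) h3
  refine ⟨f r, ?_⟩
  have : f p = f (p - q) := by rw [map_sub, hq0, sub_zero]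
  rw [this, hr, map_smul]

/-- Transfer the subtype-level `Good` of a submodule to a kernel-style condition. -/
lemma good_submodule_elim {a b : S} {F : Type} [AddCommGroup F] [Module S F]
    {N : Submodule S F} (h : Good a b N) :
    ∀ p ∈ N, a • p = 0 → ∃ q ∈ N, p = b • q := by
  intro p hp hap
  obtain ⟨q, hq⟩ := h ⟨p, hp⟩ (Subtype.ext (by simpa using hap))
  exact ⟨q, q.2, by simpa [Subtype.ext_iff] using hq⟩

end Good

section Resolution

variable (S : Type) [CommRing S]

/-- The key lemma : modules of finite projective dimension inherit the `Good` pair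
property from the ring. -/
lemma goodPair_of_projDimLE (a b : S) (hab : a * b = 0)
    (hSab : Good a b S) (hSba : Good b a S)
    (T : Type) [AddCommGroup T] [Module S T] (d : ℕ) (hpd : ProjDimLE S T d) :
    Good a b T ∧ Good b a T := by
  have hba : b * a = 0 := by rwa [mul_comm]
  obtain ⟨P⟩ := (inferInstance : HasProjectiveResolution (ModuleCat.of S T)).out
  set C := P.complex with hC
  -- Good pair for projective objects of the resolution
  have hproj : ∀ i : ℕ, Good a b (C.X i) ∧ Good b a (C.X i) := by
    intro i
    have : Projective (ModuleCat.of S (C.X i)) := by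
      rw [ModuleCat.of_coe]; exact P.projective i
    have hmp : Module.Projective S (C.X i) := (IsProjective.iff_projective _).mpr this
    exact ⟨good_of_projective hSab _ hmp, good_of_projective hSba _ hmp⟩
  -- syzygies
  set K : ℕ → Prop := fun j =>
    Good a b (LinearMap.range ((C.d (j + 1) j).hom : C.X (j + 1) →ₗ[S] C.X j)) ∧
    Good b a (LinearMap.range ((C.d (j + 1) j).hom : C.X (j + 1) →ₗ[S] C.X j)) with hKdef
  -- Base: the `d`-th syzygy is a retract of `C.X d` via Ext vanishing.
  have hbase : K d := by
    set N : Submodule S (C.X d) := LinearMap.range ((C.d (d + 1) d).hom : C.X (d + 1) →ₗ[S] C.X d)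
      with hN
    have hsub : Subsingleton
        (((Ext S (ModuleCat S) (d + 1)).obj (Opposite.op (ModuleCat.of S T))).obj
          (ModuleCat.of S N)) := hpd (ModuleCat.of S N)
    set Y := C.linearYonedaObj S (ModuleCat.of S N) with hY
    have hiso := P.isoExt (R := S) (d + 1) (ModuleCat.of S N)
    have hsub2 : Subsingleton (Y.homology (d + 1)) :=
      Equiv.subsingleton (((forget (ModuleCat S)).mapIso hiso).toEquiv.symm)
    have hzero : Limits.IsZero (Y.homology (d + 1)) := ModuleCat.isZero_of_subsingleton _
    have hex : Y.ExactAt (d + 1) := (Y.exactAt_iff_isZero_homology (d + 1)).mpr hzero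
    have hex' : (Y.sc' d (d + 1) (d + 2)).Exact :=
      (Y.exactAt_iff' d (d + 1) (d + 2) (by simp) (by simp)).mp hex
    have hexel := (Y.sc' d (d + 1) (d + 2)).moduleCat_exact_iff.mp hex'
    -- the corestriction of the differential
    set φ : C.X (d + 1) ⟶ ModuleCat.of S N := ModuleCat.ofHom <|
      LinearMap.codRestrict N ((C.d (d + 1) d).hom : C.X (d + 1) →ₗ[S] C.X d)
        (fun y => LinearMap.mem_range_self _ y) with hφ
    have hφd : (Y.sc' d (d + 1) (d + 2)).g φ = 0 := by
      show C.d (d + 2) (d + 1) ≫ φ = 0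
      ext y
      show ((C.d (d + 1) d).hom : C.X (d + 1) →ₗ[S] C.X d) ((C.d (d + 2) (d + 1)).hom y) = 0
      have := C.d_comp_d (d + 2) (d + 1) d
      calc ((C.d (d + 2) (d + 1)) ≫ (C.d (d + 1) d)).hom y = (0 : C.X (d+2) ⟶ C.X d).hom y := by
            rw [this]
        _ = 0 := rfl
    obtain ⟨ψ, hψ⟩ := hexel φ hφd
    let ψ' : C.X d ⟶ ModuleCat.of S N := ψ
    have hψ'' : C.d (d + 1) d ≫ ψ' = φ := hψ
    have hψ' : ∀ z : C.X (d + 1), ψ'.hom ((C.d (d + 1) d).hom z) = φ.hom z := by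
      intro z
      have h := congrArg (fun f => f.hom z) hψ''
      simpa using h
    have hretract : ∀ k : N, (ψ'.hom : C.X d →ₗ[S] N) ((N.subtype) k) = k := by
      rintro ⟨k, hk⟩
      obtain ⟨z, rfl⟩ := hk
      exact Subtype.ext (by rw [show ((N.subtype) (⟨(C.d (d+1) d).hom z, ⟨z, rfl⟩⟩ : N)) =
        (C.d (d+1) d).hom z from rfl, hψ' z]; rfl)
    exact ⟨good_of_retract (ψ'.hom : C.X d →ₗ[S] N) N.subtype hretract (hproj d).1,
      good_of_retract (ψ'.hom : C.X d →ₗ[S] N) N.subtype hretract (hproj d).2⟩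
  -- Step down
  have hstep : ∀ j : ℕ, K (j + 1) → K j := by
    intro j hKj
    set N : Submodule S (C.X j) := LinearMap.range ((C.d (j + 1) j).hom : C.X (j + 1) →ₗ[S] C.X j)
    set f : C.X (j + 1) →ₗ[S] N :=
      LinearMap.codRestrict N ((C.d (j + 1) j).hom : C.X (j + 1) →ₗ[S] C.X j)
        (fun y => LinearMap.mem_range_self _ y) with hf
    have hfs : Function.Surjective f := by
      rintro ⟨m, y, rfl⟩
      exact ⟨y, rfl⟩
    have hexact := (P.exact_succ j).moduleCat_range_eq_ker
    -- kernel of f is the (j+1)-st syzygy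
    have hkermem : ∀ p : C.X (j + 1), f p = 0 ↔
        p ∈ LinearMap.range ((C.d (j + 2) (j + 1)).hom : C.X (j + 2) →ₗ[S] C.X (j + 1)) := by
      intro p
      have h1 : f p = 0 ↔ ((C.d (j + 1) j).hom : C.X (j + 1) →ₗ[S] C.X j) p = 0 := by
        constructor
        · intro h; exact congrArg Subtype.val h
        · intro h; exact Subtype.ext h
      rw [h1]
      rw [show LinearMap.range ((C.d (j + 2) (j + 1)).hom : C.X (j + 2) →ₗ[S] C.X (j + 1)) =
        LinearMap.ker ((C.d (j + 1) j).hom : C.X (j + 1) →ₗ[S] C.X j) from hexact]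
      exact (LinearMap.mem_ker).symm
    constructor
    · refine good_climb hab f hfs ?_ (hproj (j + 1)).1
      intro p hp hbp
      obtain ⟨q, hq, hpq⟩ := good_submodule_elim hKj.2 p ((hkermem p).mp hp) hbp
      exact ⟨q, (hkermem q).mpr hq, hpq⟩
    · refine good_climb hba f hfs ?_ (hproj (j + 1)).2
      intro p hp hbp
      obtain ⟨q, hq, hpq⟩ := good_submodule_elim hKj.1 p ((hkermem p).mp hp) hbp
      exact ⟨q, (hkermem q).mpr hq, hpq⟩
  -- all the way down
  have hdown : ∀ i : ℕ, K (d - i) := by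
    intro i
    induction i with
    | zero => simpa using hbase
    | succ i ih =>
      by_cases hle : i < d
      · have : d - i = (d - (i + 1)) + 1 := by omega
        exact hstep _ (by rwa [this] at ih)
      · have : d - (i + 1) = d - i := by omega
        rwa [this]
  have hK0 : K 0 := by simpa using hdown d
  -- final climb to T
  set π₀ : C.X 0 →ₗ[S] T := (P.π.f 0 : C.X 0 ⟶ ModuleCat.of S T).hom with hπ
  have hπs : Function.Surjective π₀ := by
    have : Epi (P.π.f 0) := inferInstance
    exact (ModuleCat.epi_iff_surjective (P.π.f 0)).mp this
  have hexact0 := P.exact₀.moduleCat_range_eq_ker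
  have hker0 : ∀ p : C.X 0, π₀ p = 0 ↔
      p ∈ LinearMap.range ((C.d 1 0).hom : C.X 1 →ₗ[S] C.X 0) := by
    intro p
    rw [show LinearMap.range ((C.d 1 0).hom : C.X 1 →ₗ[S] C.X 0) =
      LinearMap.ker ((P.π.f 0 : C.X 0 ⟶ ModuleCat.of S T).hom : C.X 0 →ₗ[S] T) from hexact0]
    exact (LinearMap.mem_ker).symm
  constructor
  · refine good_climb hab π₀ hπs ?_ (hproj 0).1
    intro p hp hbp
    obtain ⟨q, hq, hpq⟩ := good_submodule_elim hK0.2 p ((hker0 p).mp hp) hbp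
    exact ⟨q, (hker0 q).mpr hq, hpq⟩
  · refine good_climb hba π₀ hπs ?_ (hproj 0).2
    intro p hp hbp
    obtain ⟨q, hq, hpq⟩ := good_submodule_elim hK0.1 p ((hker0 p).mp hp) hbp
    exact ⟨q, (hker0 q).mpr hq, hpq⟩

end Resolution

/-- Let `R` be a Noetherian local ring, `x` a non-zerodivisor in the maximal
ideal, `S = R/(xⁿ)` with `n > 1`, and `T` a finitely generated `S`-module of finite projective
dimension over `S`.  Then `(0 :_T x) ≅ T/xT`. -/
theorem stmt1 (R : Type) [CommRing R] [IsNoetherianRing R] [IsLocalRing R]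
    (x : R) (hx : x ∈ nonZeroDivisors R) (hxm : x ∈ IsLocalRing.maximalIdeal R)
    (n : ℕ) (hn : 1 < n)
    (T : Type) [AddCommGroup T] [Module (R ⧸ Ideal.span {x ^ n}) T]
    [Module.Finite (R ⧸ Ideal.span {x ^ n}) T]
    (hpd : ∃ d : ℕ, ProjDimLE (R ⧸ Ideal.span {x ^ n}) T d) :
    Nonempty
      ((LinearMap.ker (LinearMap.lsmul (R ⧸ Ideal.span {x ^ n}) T
          (Ideal.Quotient.mk (Ideal.span {x ^ n}) x)))
        ≃ₗ[R ⧸ Ideal.span {x ^ n}]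
       (T ⧸ ((Ideal.span {Ideal.Quotient.mk (Ideal.span {x ^ n}) x}) • (⊤ : Submodule (R ⧸ Ideal.span {x ^ n}) T)))) := by
  classical
  set S := R ⧸ Ideal.span {x ^ n} with hS
  set mk := Ideal.Quotient.mk (Ideal.span {x ^ n}) with hmk
  set a : S := mk x with ha
  set b : S := mk (x ^ (n - 1)) with hb
  have hxn : x ^ n = x * x ^ (n - 1) := by
    conv_lhs => rw [show n = 1 + (n - 1) by omega]
    rw [pow_add, pow_one]
  have hab : a * b = 0 := by
    rw [ha, hb, ← map_mul, ← hxn]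
    exact Ideal.Quotient.eq_zero_iff_mem.mpr (Ideal.mem_span_singleton_self _)
  -- cancellation facts
  have hxc : ∀ (y : R), y ∈ nonZeroDivisors R → ∀ r s : R, y * r = y * s → r = s := by
    intro y hy r s h
    have h0 : (r - s) * y = 0 := by
      rw [sub_mul, mul_comm r y, mul_comm s y, h, sub_self]
    exact sub_eq_zero.mp (mem_nonZeroDivisors_iff_right.mp hy _ h0)
  have hx' : x ^ (n - 1) ∈ nonZeroDivisors R := pow_mem hx (n - 1)
  -- Good a b S
  have hSab : Good a b S := by
    intro s hs
    obtain ⟨r, rfl⟩ := Ideal.Quotient.mk_surjective s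
    have hs' : mk (x * r) = 0 := by
      rw [map_mul]; rw [smul_eq_mul] at hs; exact hs
    obtain ⟨c, hc⟩ := Ideal.mem_span_singleton.mp (Ideal.Quotient.eq_zero_iff_mem.mp hs')
    have hc' : x * r = x * (x ^ (n - 1) * c) := by rw [hc, hxn]; ring
    have hr : r = x ^ (n - 1) * c := hxc x hx _ _ hc'
    exact ⟨mk c, by rw [hr, hb, smul_eq_mul, ← map_mul]⟩
  -- Good b a S
  have hSba : Good b a S := by
    intro s hs
    obtain ⟨r, rfl⟩ := Ideal.Quotient.mk_surjective s
    have hs' : mk (x ^ (n - 1) * r) = 0 := by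
      rw [map_mul]; rw [smul_eq_mul] at hs; exact hs
    obtain ⟨c, hc⟩ := Ideal.mem_span_singleton.mp (Ideal.Quotient.eq_zero_iff_mem.mp hs')
    have hc' : x ^ (n - 1) * r = x ^ (n - 1) * (x * c) := by rw [hc, hxn]; ring
    have hr : r = x * c := hxc _ hx' _ _ hc'
    exact ⟨mk c, by rw [hr, ha, smul_eq_mul, ← map_mul]⟩
  obtain ⟨d, hd⟩ := hpd
  obtain ⟨hT1, hT2⟩ := goodPair_of_projDimLE S a b hab hSab hSba T d hd
  -- Build the isomorphism
  set Φ : T →ₗ[S] LinearMap.ker (LinearMap.lsmul S T a) :=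
    LinearMap.codRestrict _ (LinearMap.lsmul S T b) (fun t => by
      simp only [LinearMap.mem_ker, LinearMap.lsmul_apply]
      rw [smul_smul, hab, zero_smul]) with hΦ
  have hΦs : Function.Surjective Φ := by
    rintro ⟨k, hk⟩
    rw [LinearMap.mem_ker, LinearMap.lsmul_apply] at hk
    obtain ⟨t, ht⟩ := hT1 k hk
    exact ⟨t, Subtype.ext (by simpa [hΦ, LinearMap.codRestrict] using ht.symm)⟩
  have hkerΦ : LinearMap.ker Φ =
      (Ideal.span {a} • (⊤ : Submodule S T)) := by
    apply le_antisymm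
    · intro t ht
      rw [LinearMap.mem_ker] at ht
      have hbt : b • t = 0 := by
        have := congrArg Subtype.val ht
        simpa [hΦ, LinearMap.codRestrict] using this
      obtain ⟨u, hu⟩ := hT2 t hbt
      rw [hu]
      exact Submodule.smul_mem_smul (Ideal.mem_span_singleton_self a) trivial
    · rw [Submodule.smul_le]
      intro r hr m _
      obtain ⟨c, hc⟩ := Ideal.mem_span_singleton'.mp hr
      rw [LinearMap.mem_ker]
      apply Subtype.ext
      show b • (r • m) = (0 : T)
      rw [← hc, smul_smul, show b * (c * a) = (a * b) * c by ring, hab, zero_mul, zero_smul]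
  exact ⟨((Submodule.quotEquivOfEq _ _ hkerΦ.symm).trans
    (Φ.quotKerEquivOfSurjective hΦs)).symm⟩
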